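/- For every fixed integer b ≥ 2 there exists a₀ such that for all integers a, n with a₀ ≤ a < n: if n·C(a,b) ≥ C(n,b), then n·a^b ≥ n^b. -/

import Mathlib

private lemma pow_le_pow_add_aux (x y : ℕ) (h : y ≤ x) :
    ∀ d : ℕ, x ^ (d + 1) ≤ y ^ (d + 1) + (d + 1) * (x - y) * x ^ d
  | 0 => by simp; omega
  | d + 1 => by
    have ih := pow_le_pow_add_aux x y h d
    have h1 : x ^ (d + 2) = x * x ^ (d + 1) := by ring
    have h2 : x * x ^ (d + 1) ≤ x * (y ^ (d + 1) + (d + 1) * (x - y) * x ^ d) :=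
      Nat.mul_le_mul_left x ih
    have h3 : x * (y ^ (d + 1) + (d + 1) * (x - y) * x ^ d)
        = x * y ^ (d + 1) + (d + 1) * (x - y) * x ^ (d + 1) := by ring
    have h4 : x * y ^ (d + 1) = y * y ^ (d + 1) + (x - y) * y ^ (d + 1) := by
      rw [← Nat.add_mul]; congr 1; omega
    have h5 : (x - y) * y ^ (d + 1) ≤ (x - y) * x ^ (d + 1) :=
      Nat.mul_le_mul_left _ (Nat.pow_le_pow_left h _)
    calc x ^ (d + 2) = x * x ^ (d + 1) := h1
      _ ≤ x * y ^ (d + 1) + (d + 1) * (x - y) * x ^ (d + 1) := by omega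
      _ = y ^ (d + 2) + (x - y) * y ^ (d + 1) + (d + 1) * (x - y) * x ^ (d + 1) := by
          rw [h4]; ring
      _ ≤ y ^ (d + 2) + (d + 2) * (x - y) * x ^ (d + 1) := by
          have := h5; nlinarith

/-- Lemma 2.3: for fixed `b ≥ 2` and all sufficiently large `a < n`, the
inequality `n·C(a,b) ≥ C(n,b)` implies `n·a^b ≥ n^b`. -/
theorem stmt5 (b : ℕ) (hb : 2 ≤ b) :
    ∃ a₀ : ℕ, ∀ a n : ℕ, a₀ ≤ a → a < n →
      Nat.choose n b ≤ n * Nat.choose a b → n ^ b ≤ n * a ^ b := by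
  obtain ⟨d, rfl⟩ : ∃ d, b = d + 2 := ⟨b - 2, by omega⟩
  set c : ℕ := d + 1 with hcdef
  refine ⟨2 ^ (c ^ 2) * c ^ (c + 1) + 2 * c + 2, fun a n ha han h => ?_⟩
  have hca : 2 * c + 2 ≤ a := le_trans (by omega) ha
  have hcn : 2 * c + 2 < n := lt_of_le_of_lt hca han
  have hn0 : 0 < n := by omega
  -- convert hypothesis to descending factorials
  have hdesc : Nat.descFactorial n (c + 1) ≤ n * Nat.descFactorial a (c + 1) := by
    rw [Nat.descFactorial_eq_factorial_mul_choose, Nat.descFactorial_eq_factorial_mul_choose]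
    have h' : Nat.choose n (c + 1) ≤ n * Nat.choose a (c + 1) := h
    calc Nat.factorial (c + 1) * Nat.choose n (c + 1)
        ≤ Nat.factorial (c + 1) * (n * Nat.choose a (c + 1)) :=
          Nat.mul_le_mul_left _ h'
      _ = n * (Nat.factorial (c + 1) * Nat.choose a (c + 1)) := by ring
  -- peel off the factor n
  obtain ⟨m, rfl⟩ : ∃ m, n = m + 1 := ⟨n - 1, by omega⟩
  rw [Nat.succ_descFactorial_succ] at hdesc
  have hd2 : Nat.descFactorial m c ≤ Nat.descFactorial a (c + 1) :=
    Nat.le_of_mul_le_mul_left hdesc hn0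
  -- bound both sides
  have hlow : (m + 1 - c) ^ c ≤ Nat.descFactorial m c := Nat.pow_sub_le_descFactorial m c
  have hup : Nat.descFactorial a (c + 1) ≤ (a - c) * a ^ c := by
    rw [Nat.descFactorial_succ]
    exact Nat.mul_le_mul_left _ (Nat.descFactorial_le_pow a c)
  set n : ℕ := m + 1 with hndef
  have key : (n - c) ^ c ≤ (a - c) * a ^ c := le_trans hlow (le_trans hd2 hup)
  -- main goal reduces to n ^ c ≤ a ^ (c + 1)
  suffices hmain : n ^ c ≤ a ^ (c + 1) by
    calc n ^ (d + 2) = n * n ^ c := by rw [hcdef]; ring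
      _ ≤ n * a ^ (c + 1) := Nat.mul_le_mul_left n hmain
      _ = n * a ^ (d + 2) := by rw [hcdef]
  by_contra hcon
  push_neg at hcon
  -- telescoping bound: n^c ≤ (n-c)^c + c*c*n^(c-1)
  have tele : n ^ c ≤ (n - c) ^ c + c * c * n ^ d := by
    have := pow_le_pow_add_aux n (n - c) (Nat.sub_le n c) d
    have hsub : n - (n - c) = c := by omega
    rw [hsub] at this
    exact this
  have hsplit : (a - c) * a ^ c + c * a ^ c = a ^ (c + 1) := by
    rw [← Nat.add_mul]
    have : a - c + c = a := by omega
    rw [this]; ring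
  -- derive a^c < c * n^d
  have hac : a ^ c < c * n ^ d := by
    have h1 : n ^ c + c * a ^ c ≤ a ^ (c + 1) + c * c * n ^ d := by omega
    have h2 : c * a ^ c < c * (c * n ^ d) := by nlinarith
    exact lt_of_mul_lt_mul_left h2 (Nat.zero_le c)
  -- and (n-c)^c ≤ a^(c+1)
  have hnc : (n - c) ^ c ≤ a ^ (c + 1) := le_trans key (by omega)
  -- raise to powers
  have e1 : ((n - c) ^ c) ^ c ≤ (a ^ (c + 1)) ^ c := Nat.pow_le_pow_left hnc c
  have e2 : (a ^ (c + 1)) ^ c = (a ^ c) ^ (c + 1) := by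
    rw [← pow_mul, ← pow_mul, Nat.mul_comm]
  have e3 : (a ^ c) ^ (c + 1) ≤ (c * n ^ d) ^ (c + 1) :=
    Nat.pow_le_pow_left (le_of_lt hac) (c + 1)
  have e4 : (c * n ^ d) ^ (c + 1) = c ^ (c + 1) * n ^ (d * (c + 1)) := by
    rw [mul_pow, ← pow_mul]
  have e5 : n ^ (c ^ 2) ≤ 2 ^ (c ^ 2) * ((n - c) ^ c) ^ c := by
    have h2n : n ≤ 2 * (n - c) := by omega
    calc n ^ (c ^ 2) ≤ (2 * (n - c)) ^ (c ^ 2) := Nat.pow_le_pow_left h2n _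
      _ = 2 ^ (c ^ 2) * (n - c) ^ (c ^ 2) := by rw [mul_pow]
      _ = 2 ^ (c ^ 2) * ((n - c) ^ c) ^ c := by rw [← pow_mul, sq]
  have e6 : n ^ (c ^ 2) ≤ 2 ^ (c ^ 2) * c ^ (c + 1) * n ^ (d * (c + 1)) := by
    calc n ^ (c ^ 2) ≤ 2 ^ (c ^ 2) * ((n - c) ^ c) ^ c := e5
      _ ≤ 2 ^ (c ^ 2) * (c ^ (c + 1) * n ^ (d * (c + 1))) := by
          refine Nat.mul_le_mul_left _ ?_
          calc ((n - c) ^ c) ^ c ≤ (a ^ (c + 1)) ^ c := e1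
            _ = (a ^ c) ^ (c + 1) := e2
            _ ≤ (c * n ^ d) ^ (c + 1) := e3
            _ = c ^ (c + 1) * n ^ (d * (c + 1)) := e4
      _ = 2 ^ (c ^ 2) * c ^ (c + 1) * n ^ (d * (c + 1)) := by ring
  have hexp : c ^ 2 = d * (c + 1) + 1 := by rw [hcdef]; ring
  have e7 : n ^ (d * (c + 1)) * n ≤ n ^ (d * (c + 1)) * (2 ^ (c ^ 2) * c ^ (c + 1)) := by
    calc n ^ (d * (c + 1)) * n = n ^ (c ^ 2) := by rw [hexp, pow_succ]
      _ ≤ 2 ^ (c ^ 2) * c ^ (c + 1) * n ^ (d * (c + 1)) := e6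
      _ = n ^ (d * (c + 1)) * (2 ^ (c ^ 2) * c ^ (c + 1)) := by ring
  have hnpos : 0 < n ^ (d * (c + 1)) := Nat.pow_pos hn0
  have : n ≤ 2 ^ (c ^ 2) * c ^ (c + 1) := Nat.le_of_mul_le_mul_left e7 hnpos
  omega
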